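/- Let q be a prime power and let H be a subgroup of PGL₂(F_q) with |H| = r+1, acting naturally on the projective line P¹(F_q) by Möbius transformations. Let V_s denote the number of short orbits (orbits of cardinality < r+1). Then the number of long orbits (orbits of cardinality exactly r+1) equals (q+1)/(r+1) if V_s = 0; equals ⌈(q+1)/(r+1)⌉ − 1 if V_s = 1 or V_s = 2; and equals ⌈(q+1)/(r+1)⌉ − 2 if V_s = 3. -/

import Mathlib

/-- The Möbius transformation `x ↦ (ax+b)/(cx+d)` on the projective line
`P¹(F) = F ∪ {∞}`, with `none` playing the role of `∞`. -/
def mobiusMap {F : Type*} [Field F] [DecidableEq F] (a b c d : F) :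
    Option F → Option F
  | none => if c = 0 then none else some (a / c)
  | some x => if c * x + d = 0 then none else some ((a * x + b) / (c * x + d))

/-- A permutation of `P¹(F)` is Möbius if it is given by some `(ax+b)/(cx+d)`
with `ad - bc ≠ 0`; such permutations are exactly the elements of `PGL₂(F_q)`
in its natural action on the projective line. -/
def IsMobius {F : Type*} [Field F] [DecidableEq F] (σ : Equiv.Perm (Option F)) : Prop :=
  ∃ a b c d : F, a * d - b * c ≠ 0 ∧ ∀ x, σ x = mobiusMap a b c d x

section MobiusAux
variable {F : Type*} [Field F] [DecidableEq F]

lemma mobiusMap_none (a b c d : F) :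
    mobiusMap a b c d none = if c = 0 then none else some (a / c) := rfl

lemma mobiusMap_some (a b c d x : F) :
    mobiusMap a b c d (some x) =
      if c * x + d = 0 then none else some ((a * x + b) / (c * x + d)) := rfl

/-- A Möbius transformation fixing three distinct points of `P¹(F)` is the identity. -/
lemma mobius_three_fixed (σ : Equiv.Perm (Option F)) (h : IsMobius σ) {x y z : Option F}
    (hxy : x ≠ y) (hxz : x ≠ z) (hyz : y ≠ z)
    (hx : σ x = x) (hy : σ y = y) (hz : σ z = z) : σ = 1 := by
  obtain ⟨a, b, c, d, hdet, hσ⟩ := h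
  have hfix : ∀ t : F, σ (some t) = some t → a * t + b = t * (c * t + d) := by
    intro t ht
    rw [hσ, mobiusMap_some] at ht
    by_cases h0 : c * t + d = 0
    · simp [h0] at ht
    · rw [if_neg h0] at ht
      have ht' := Option.some.inj ht
      rw [div_eq_iff h0] at ht'
      linear_combination ht'
  by_cases hc : c = 0
  · subst hc
    have had : a * d ≠ 0 := by
      intro h; apply hdet; rw [mul_zero, sub_zero]; exact h
    have ha : a ≠ 0 := left_ne_zero_of_mul had
    have hd : d ≠ 0 := right_ne_zero_of_mul had
    have hlin : ∀ t : F, σ (some t) = some t → a * t + b = t * d := by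
      intro t ht
      have := hfix t ht
      linear_combination this
    have htwo : ∃ t₁ t₂ : F, t₁ ≠ t₂ ∧ σ (some t₁) = some t₁ ∧ σ (some t₂) = some t₂ := by
      rcases x with _ | t₁ <;> rcases y with _ | t₂ <;> rcases z with _ | t₃
      · exact absurd rfl hxy
      · exact absurd rfl hxy
      · exact absurd rfl hxz
      · exact ⟨t₂, t₃, by simpa using hyz, hy, hz⟩
      · exact absurd rfl hyz
      · exact ⟨t₁, t₃, by simpa using hxz, hx, hz⟩
      · exact ⟨t₁, t₂, by simpa using hxy, hx, hy⟩
      · exact ⟨t₁, t₂, by simpa using hxy, hx, hy⟩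
    obtain ⟨t₁, t₂, h12, hf1, hf2⟩ := htwo
    have e1 := hlin t₁ hf1
    have e2 := hlin t₂ hf2
    have hadd : (t₁ - t₂) * (a - d) = 0 := by linear_combination e1 - e2
    have had' : a = d := by
      rcases mul_eq_zero.mp hadd with h | h
      · exact absurd (sub_eq_zero.mp h) h12
      · exact sub_eq_zero.mp h
    have hb : b = 0 := by
      rw [had'] at e1
      linear_combination e1
    subst hb; subst had'
    ext u
    rcases u with _ | t
    · rw [hσ, mobiusMap_none, if_pos rfl]; rfl
    · rw [hσ, mobiusMap_some]
      rw [if_neg (by simpa using hd)]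
      simp only [Equiv.Perm.coe_one, id_eq, zero_mul, zero_add, add_zero]
      field_simp
  · have hnone : ∀ u : Option F, σ u = u → u ≠ none := by
      intro u hu hn
      subst hn
      rw [hσ, mobiusMap_none, if_neg hc] at hu
      exact Option.some_ne_none _ hu
    rcases x with _ | t₁
    · exact absurd rfl (hnone none hx)
    rcases y with _ | t₂
    · exact absurd rfl (hnone none hy)
    rcases z with _ | t₃
    · exact absurd rfl (hnone none hz)
    have e1 := hfix t₁ hx
    have e2 := hfix t₂ hy
    have e3 := hfix t₃ hz
    have h12 : t₁ ≠ t₂ := by simpa using hxy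
    have h13 : t₁ ≠ t₃ := by simpa using hxz
    have h23 : t₂ ≠ t₃ := by simpa using hyz
    have k12 : (t₁ - t₂) * (c * (t₁ + t₂) + d - a) = 0 := by linear_combination e2 - e1
    have k13 : (t₁ - t₃) * (c * (t₁ + t₃) + d - a) = 0 := by linear_combination e3 - e1
    have q12 : c * (t₁ + t₂) + d - a = 0 :=
      (mul_eq_zero.mp k12).resolve_left fun h => h12 (sub_eq_zero.mp h)
    have q13 : c * (t₁ + t₃) + d - a = 0 :=
      (mul_eq_zero.mp k13).resolve_left fun h => h13 (sub_eq_zero.mp h)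
    have : c * (t₂ - t₃) = 0 := by linear_combination q12 - q13
    rcases mul_eq_zero.mp this with h | h
    · exact absurd h hc
    · exact absurd (sub_eq_zero.mp h) h23

end MobiusAux

lemma arith_case2 (q r L T : ℕ) (h1 : T + L * (r+1) = q+1) (hT1 : 1 ≤ T) (hT2 : T ≤ r+1) :
    L = (q + 1 + (r+1) - 1)/(r+1) - 1 := by
  have lo : (L+1)*(r+1) ≤ q+1+r := by nlinarith
  have hi : q+1+r < (L+1+1)*(r+1) := by nlinarith
  have hdiv : (q+1+r)/(r+1) = L+1 := Nat.div_eq_of_lt_le lo hi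
  have he : q + 1 + (r+1) - 1 = q+1+r := by omega
  rw [he, hdiv]; omega

lemma arith_case3 (q r L T : ℕ) (h1 : T + L * (r+1) = q+1) (hT1 : r+2 ≤ T) (hT2 : T ≤ 2*r+2) :
    L = (q + 1 + (r+1) - 1)/(r+1) - 2 := by
  have lo : (L+2)*(r+1) ≤ q+1+r := by nlinarith
  have hi : q+1+r < (L+2+1)*(r+1) := by nlinarith
  have hdiv : (q+1+r)/(r+1) = L+2 := Nat.div_eq_of_lt_le lo hi
  have he : q + 1 + (r+1) - 1 = q+1+r := by omega
  rw [he, hdiv]; omega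

open MulAction in
/-- For a subgroup `H` of `PGL₂(F_q)` with `|H| = r+1` acting naturally on `P¹(F_q)`,
writing `V_s` for the number of short orbits, the number of long orbits (of size
exactly `r+1`) equals `(q+1)/(r+1)` if `V_s = 0`, `⌈(q+1)/(r+1)⌉ - 1` if `V_s ∈ {1,2}`,
and `⌈(q+1)/(r+1)⌉ - 2` if `V_s = 3`.  (Here `⌈(q+1)/(r+1)⌉` is written as the ceiling
division `(q + 1 + (r+1) - 1) / (r+1)` of natural numbers.) -/
theorem stmt9 {F : Type*} [Field F] [Fintype F] [DecidableEq F]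
    (r : ℕ) (H : Subgroup (Equiv.Perm (Option F))) (hH : ∀ σ ∈ H, IsMobius σ)
    (hcard : Nat.card H = r + 1)
    (Vs Lc : ℕ)
    (hVs : Vs = {O : Set (Option F) |
        (∃ x, O = MulAction.orbit H x) ∧ O.ncard < r + 1}.ncard)
    (hLc : Lc = {O : Set (Option F) |
        (∃ x, O = MulAction.orbit H x) ∧ O.ncard = r + 1}.ncard) :
    (Vs = 0 → Lc = (Fintype.card F + 1) / (r + 1)) ∧
    (Vs = 1 ∨ Vs = 2 → Lc = (Fintype.card F + 1 + (r + 1) - 1) / (r + 1) - 1) ∧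
    (Vs = 3 → Lc = (Fintype.card F + 1 + (r + 1) - 1) / (r + 1) - 2) := by
  classical
  have hr : 0 < r + 1 := Nat.succ_pos r
  letI : Fintype ↥H := Fintype.ofFinite _
  letI instΩ : Fintype (orbitRel.Quotient ↥H (Option F)) := Fintype.ofFinite _
  -- orbit sizes divide r+1
  have key : ∀ b : Option F, (MulAction.orbit ↥H b).ncard ∣ r + 1 := by
    intro b
    have h1 := MulAction.card_orbit_mul_card_stabilizer_eq_card_group ↥H b
    simp only [← Nat.card_eq_fintype_card] at h1
    rw [hcard, Nat.card_coe_set_eq] at h1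
    exact ⟨_, h1.symm⟩
  have hdvd : ∀ ω : orbitRel.Quotient ↥H (Option F), ω.orbit.ncard ∣ r + 1 := by
    intro ω
    rw [orbitRel.Quotient.orbit_eq_orbit_out ω Quotient.out_eq']
    exact key _
  have hle : ∀ ω : orbitRel.Quotient ↥H (Option F), ω.orbit.ncard ≤ r + 1 :=
    fun ω => Nat.le_of_dvd hr (hdvd ω)
  have hpos : ∀ ω : orbitRel.Quotient ↥H (Option F), 1 ≤ ω.orbit.ncard := by
    intro ω
    have := Set.ncard_pos (s := ω.orbit) (Set.toFinite _)
    exact this.mpr (orbitRel.Quotient.nonempty_orbit ω)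
  have hshort : ∀ ω : orbitRel.Quotient ↥H (Option F),
      ω.orbit.ncard < r + 1 → 2 * ω.orbit.ncard ≤ r + 1 := by
    intro ω hlt
    obtain ⟨k, hk⟩ := hdvd ω
    have hk2 : 2 ≤ k := by
      rcases Nat.lt_or_ge k 2 with h | h
      · interval_cases k <;> omega
      · exact h
    calc 2 * ω.orbit.ncard ≤ k * ω.orbit.ncard := Nat.mul_le_mul_right _ hk2
      _ = r + 1 := by rw [mul_comm] at hk; omega
  -- total size of all orbits
  have hsum : ∑ ω : orbitRel.Quotient ↥H (Option F), ω.orbit.ncard = Fintype.card F + 1 := by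
    have e := Fintype.card_congr (MulAction.selfEquivSigmaOrbits' ↥H (Option F))
    rw [Fintype.card_sigma] at e
    simp only [← Nat.card_eq_fintype_card, Nat.card_coe_set_eq] at e
    rw [Nat.card_eq_fintype_card, Fintype.card_option] at e
    exact e.symm
  -- Burnside bound
  have hburn : Nat.card (orbitRel.Quotient ↥H (Option F)) * (r + 1)
      ≤ Fintype.card F + 1 + 2 * r := by
    have hb := MulAction.sum_card_fixedBy_eq_card_orbits_mul_card_group ↥H (Option F)
    simp only [← Nat.card_eq_fintype_card] at hb
    rw [hcard] at hb
    have hQ : Nat.card (Quotient (orbitRel ↥H (Option F)))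
        = Nat.card (orbitRel.Quotient ↥H (Option F)) := rfl
    rw [hQ] at hb
    rw [← hb]
    have h1 : MulAction.fixedBy (Option F) (1 : ↥H) = Set.univ := by
      ext u; simp [MulAction.fixedBy]
    have hcard1 : Nat.card (MulAction.fixedBy (Option F) (1 : ↥H)) = Fintype.card F + 1 := by
      rw [Nat.card_coe_set_eq, h1, Set.ncard_univ, Nat.card_eq_fintype_card,
        Fintype.card_option]
    have hfixle : ∀ σ : ↥H, σ ≠ 1 → Nat.card (MulAction.fixedBy (Option F) σ) ≤ 2 := by
      intro σ hσ1
      by_contra hgt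
      push_neg at hgt
      rw [Nat.card_eq_fintype_card] at hgt
      obtain ⟨u, v, w, huv, huw, hvw⟩ := Fintype.two_lt_card_iff.mp hgt
      have hu : (σ : Equiv.Perm (Option F)) u.1 = u.1 := u.2
      have hv : (σ : Equiv.Perm (Option F)) v.1 = v.1 := v.2
      have hw : (σ : Equiv.Perm (Option F)) w.1 = w.1 := w.2
      have h1 := mobius_three_fixed (σ : Equiv.Perm (Option F)) (hH σ σ.2)
        (fun h => huv (Subtype.ext h)) (fun h => huw (Subtype.ext h))
        (fun h => hvw (Subtype.ext h)) hu hv hw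
      exact hσ1 (OneMemClass.coe_eq_one.mp h1)
    have hsplit := (Finset.add_sum_erase Finset.univ
      (fun σ : ↥H => Nat.card (MulAction.fixedBy (Option F) σ)) (Finset.mem_univ 1)).symm
    rw [hsplit, hcard1]
    have hbound := Finset.sum_le_card_nsmul (Finset.univ.erase (1 : ↥H))
      (fun σ : ↥H => Nat.card (MulAction.fixedBy (Option F) σ)) 2
      (fun σ hσ => hfixle σ (Finset.ne_of_mem_erase hσ))
    simp only [smul_eq_mul] at hbound
    have hcarderase : (Finset.univ.erase (1 : ↥H)).card = r := by
      rw [Finset.card_erase_of_mem (Finset.mem_univ _), Finset.card_univ,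
        ← Nat.card_eq_fintype_card, hcard]
      omega
    rw [hcarderase] at hbound
    omega
  -- identify the sets of orbits with finsets of the quotient
  have himg : ∀ p : Set (Option F) → Prop,
      {O : Set (Option F) | (∃ x, O = MulAction.orbit H x) ∧ p O}
        = orbitRel.Quotient.orbit '' {ω : orbitRel.Quotient ↥H (Option F) | p ω.orbit} := by
    intro p
    ext O
    simp only [Set.mem_setOf_eq, Set.mem_image]
    constructor
    · rintro ⟨⟨x, rfl⟩, hp⟩
      exact ⟨Quotient.mk'' x, by rwa [orbitRel.Quotient.orbit_mk],
        orbitRel.Quotient.orbit_mk x⟩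
    · rintro ⟨ω, hp, rfl⟩
      exact ⟨⟨Quotient.out ω, (orbitRel.Quotient.orbit_eq_orbit_out ω Quotient.out_eq')⟩, hp⟩
  have hVs' : Vs = (Finset.univ.filter
      (fun ω : orbitRel.Quotient ↥H (Option F) => ω.orbit.ncard < r + 1)).card := by
    rw [hVs, himg (fun O => O.ncard < r + 1),
      Set.ncard_image_of_injective _ orbitRel.Quotient.orbit_injective,
      ← Set.ncard_coe_finset]
    congr 1
    ext ω
    simp
  have hLc' : Lc = (Finset.univ.filter
      (fun ω : orbitRel.Quotient ↥H (Option F) => ¬ ω.orbit.ncard < r + 1)).card := by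
    rw [hLc, himg (fun O => O.ncard = r + 1),
      Set.ncard_image_of_injective _ orbitRel.Quotient.orbit_injective,
      ← Set.ncard_coe_finset]
    congr 1
    ext ω
    simp only [Set.mem_setOf_eq, Finset.coe_filter, Finset.mem_univ, true_and]
    have := hle ω
    omega
  set SΩ := Finset.univ.filter
    (fun ω : orbitRel.Quotient ↥H (Option F) => ω.orbit.ncard < r + 1) with hSΩ
  set LΩ := Finset.univ.filter
    (fun ω : orbitRel.Quotient ↥H (Option F) => ¬ ω.orbit.ncard < r + 1) with hLΩ
  have hNsplit : SΩ.card + LΩ.card = Nat.card (orbitRel.Quotient ↥H (Option F)) := by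
    rw [hSΩ, hLΩ, Finset.card_filter_add_card_filter_not, Finset.card_univ,
      Nat.card_eq_fintype_card]
  have hsplit2 : (∑ ω ∈ SΩ, ω.orbit.ncard) + (∑ ω ∈ LΩ, ω.orbit.ncard)
      = ∑ ω : orbitRel.Quotient ↥H (Option F), ω.orbit.ncard :=
    Finset.sum_filter_add_sum_filter_not _ _ _
  have hlongsum : (∑ ω ∈ LΩ, ω.orbit.ncard) = LΩ.card * (r + 1) := by
    rw [Finset.sum_congr rfl (fun ω hω => ?_), Finset.sum_const, smul_eq_mul]
    have hmem := (Finset.mem_filter.mp hω).2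
    have := hle ω
    omega
  set T := ∑ ω ∈ SΩ, ω.orbit.ncard with hT
  have hTge : SΩ.card ≤ T := by
    have := Finset.card_nsmul_le_sum SΩ (fun ω => ω.orbit.ncard) 1 (fun ω _ => hpos ω)
    simpa using this
  have hT2 : 2 * T ≤ SΩ.card * (r + 1) := by
    have h2 : ∑ ω ∈ SΩ, 2 * ω.orbit.ncard ≤ SΩ.card • (r + 1) :=
      Finset.sum_le_card_nsmul SΩ _ (r + 1)
        (fun ω hω => hshort ω (Finset.mem_filter.mp hω).2)
    rw [smul_eq_mul] at h2
    rw [hT, Finset.mul_sum]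
    exact h2
  have hmain : T + LΩ.card * (r + 1) = Fintype.card F + 1 := by
    rw [hT, ← hlongsum, hsplit2, hsum]
  refine ⟨?_, ?_, ?_⟩
  · intro h0
    have hS0 : SΩ.card = 0 := by omega
    have hT0 : T = 0 := by
      rw [hS0, zero_mul] at hT2; omega
    rw [hT0, zero_add] at hmain
    rw [hLc', ← hmain, Nat.mul_div_cancel _ hr]
  · intro h12
    have hS12 : 1 ≤ SΩ.card ∧ SΩ.card ≤ 2 := by omega
    have hT1' : 1 ≤ T := by omega
    have hT2' : T ≤ r + 1 := by
      have := Nat.mul_le_mul_right (r + 1) hS12.2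
      omega
    rw [hLc']
    exact arith_case2 (Fintype.card F) r LΩ.card T hmain hT1' hT2'
  · intro h3
    have hS3 : SΩ.card = 3 := by omega
    have hcΩ : Nat.card (orbitRel.Quotient ↥H (Option F)) = LΩ.card + 3 := by omega
    rw [hcΩ] at hburn
    have hT1' : r + 2 ≤ T := by nlinarith
    have hT2' : T ≤ 2 * r + 2 := by
      rw [hS3] at hT2; omega
    rw [hLc']
    exact arith_case3 (Fintype.card F) r LΩ.card T hmain hT1' hT2'
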